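/- (Proposition 3.1, Metzler block criterion) Let M be a Metzler matrix in block form M = [[A, B], [C, D]] where A and D are square. If A is invertible (which holds in particular whenever A is Metzler-stable), then M is Metzler-stable if and only if both A and the Schur complement D − C·A⁻¹·B are Metzler-stable. -/

import Mathlib

/-- A real square matrix is *Metzler* if all of its off-diagonal entries are
nonnegative. -/
def IsMetzler {n : Type*} [Fintype n] [DecidableEq n] (M : Matrix n n ℝ) : Prop :=
  ∀ i j, i ≠ j → 0 ≤ M i j

/-- A real square matrix is *Hurwitz-stable* if every root over `ℂ` of its characteristic
polynomial has strictly negative real part. -/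
def IsHurwitzStable {n : Type*} [Fintype n] [DecidableEq n] (M : Matrix n n ℝ) : Prop :=
  ∀ z : ℂ, (M.charpoly.map (algebraMap ℝ ℂ)).IsRoot z → z.re < 0

/-- A real square matrix is *Metzler-stable* if it is both Metzler and Hurwitz-stable. -/
def IsMetzlerStable {n : Type*} [Fintype n] [DecidableEq n] (M : Matrix n n ℝ) : Prop :=
  IsMetzler M ∧ IsHurwitzStable M

open Matrix Polynomial Filter Finset

namespace MetzlerAux

attribute [local instance] Matrix.linftyOpNormedRing Matrix.linftyOpNormedAlgebra

variable {n : Type*} [Fintype n] [DecidableEq n]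

lemma eval_charpoly (M : Matrix n n ℂ) (z : ℂ) :
    M.charpoly.eval z = (z • (1 : Matrix n n ℂ) - M).det := by
  have h : M.charpoly.eval z = ((M.charmatrix).map (Polynomial.evalRingHom z)).det := by
    rw [Matrix.charpoly]; exact (evalRingHom z).map_det _
  rw [h]; congr 1; ext i j
  rcases eq_or_ne i j with rfl | hij
  · simp [Matrix.charmatrix_apply_eq]
  · simp [Matrix.charmatrix_apply_ne _ _ _ hij, Matrix.one_apply_ne hij]

lemma isRoot_iff (A : Matrix n n ℝ) (z : ℂ) :
    (A.charpoly.map (algebraMap ℝ ℂ)).IsRoot z ↔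
      (z • (1 : Matrix n n ℂ) - A.map (algebraMap ℝ ℂ)).det = 0 := by
  rw [← Matrix.charpoly_map, Polynomial.IsRoot, eval_charpoly]

lemma hurwitz_of_vec {A : Matrix n n ℝ} (hA : IsMetzler A) {v : n → ℝ}
    (hv : ∀ i, 0 < v i) (hAv : ∀ i, (A.mulVec v) i < 0) : IsHurwitzStable A := by
  intro z hz
  rw [isRoot_iff] at hz
  obtain ⟨x, hx0, hx⟩ := (Matrix.exists_mulVec_eq_zero_iff).mpr hz
  -- x is an eigenvector : Ac *ᵥ x = z • x
  have heig : (A.map (algebraMap ℝ ℂ)) *ᵥ x = z • x := by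
    have := hx
    rw [Matrix.sub_mulVec, Matrix.smul_mulVec, Matrix.one_mulVec, sub_eq_zero] at this
    exact this.symm
  -- pick index maximizing ‖x i‖ / v i
  have hne : Nonempty n := by
    by_contra h
    exact hx0 (funext fun i => absurd ⟨i⟩ h)
  obtain ⟨i, -, hi⟩ := Finset.exists_max_image Finset.univ (fun j => ‖x j‖ / v j)
    ⟨Classical.arbitrary n, Finset.mem_univ _⟩
  have hxi : 0 < ‖x i‖ := by
    rcases (norm_nonneg (x i)).lt_or_eq with h | h
    · exact h
    · exfalso; apply hx0; funext j
      have h1 := hi j (Finset.mem_univ j)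
      rw [← h] at h1
      have : ‖x j‖ ≤ 0 := by
        have := (div_le_div_iff₀ (hv j) (hv i)).mp h1
        nlinarith [hv j, hv i, norm_nonneg (x j)]
      exact norm_le_zero_iff.mp this
  set c : ℝ := ‖x i‖ / v i with hc
  have hcpos : 0 < c := div_pos hxi (hv i)
  have hbound : ∀ j, ‖x j‖ ≤ c * v j := fun j => by
    have h1 := hi j (Finset.mem_univ j)
    calc ‖x j‖ = (‖x j‖ / v j) * v j := (div_mul_cancel₀ _ (hv j).ne').symm
    _ ≤ c * v j := by apply mul_le_mul_of_nonneg_right h1 (hv j).le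
  -- eigenvalue equation at i
  have hrow : (z - (A i i : ℂ)) * x i = ∑ j ∈ Finset.univ.erase i, (A i j : ℂ) * x j := by
    have h1 : ∑ j, (A i j : ℂ) * x j = z * x i := by
      have := congrFun heig i
      simpa [Matrix.mulVec, dotProduct, Matrix.map_apply] using this
    have h2 := Finset.add_sum_erase Finset.univ (fun j => (A i j : ℂ) * x j) (Finset.mem_univ i)
    rw [← h2] at h1
    linear_combination -h1
  have hnorm : ‖z - (A i i : ℂ)‖ * ‖x i‖ < (-(A i i)) * ‖x i‖ := by
    calc ‖z - (A i i : ℂ)‖ * ‖x i‖ = ‖(z - (A i i : ℂ)) * x i‖ := (norm_mul _ _).symm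
    _ = ‖∑ j ∈ Finset.univ.erase i, (A i j : ℂ) * x j‖ := by rw [hrow]
    _ ≤ ∑ j ∈ Finset.univ.erase i, ‖(A i j : ℂ) * x j‖ := norm_sum_le _ _
    _ = ∑ j ∈ Finset.univ.erase i, A i j * ‖x j‖ := by
        apply Finset.sum_congr rfl
        intro j hj
        rw [norm_mul, Complex.norm_real, Real.norm_eq_abs,
          abs_of_nonneg (hA i j (Finset.ne_of_mem_erase hj).symm)]
    _ ≤ ∑ j ∈ Finset.univ.erase i, A i j * (c * v j) := by
        apply Finset.sum_le_sum
        intro j hj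
        exact mul_le_mul_of_nonneg_left (hbound j) (hA i j (Finset.ne_of_mem_erase hj).symm)
    _ = c * ∑ j ∈ Finset.univ.erase i, A i j * v j := by
        rw [Finset.mul_sum]; apply Finset.sum_congr rfl; intros; ring
    _ < c * (-(A i i) * v i) := by
        apply mul_lt_mul_of_pos_left _ hcpos
        have h3 := Finset.add_sum_erase Finset.univ (fun j => A i j * v j) (Finset.mem_univ i)
        have h4 : ∑ j, A i j * v j < 0 := by
          have := hAv i
          simpa [Matrix.mulVec, dotProduct] using this
        rw [← h3] at h4
        linarith
    _ = (-(A i i)) * ‖x i‖ := by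
        have hcv : c * v i = ‖x i‖ := div_mul_cancel₀ _ (hv i).ne'
        rw [← hcv]; ring
  have hlt : ‖z - (A i i : ℂ)‖ < -(A i i) := (mul_lt_mul_iff_of_pos_right hxi).mp hnorm
  have := Complex.re_le_norm (z - (A i i : ℂ))
  have : z.re - A i i ≤ ‖z - (A i i : ℂ)‖ := by simpa using this
  linarith

lemma isUnit_det_of_hurwitz {A : Matrix n n ℝ} (hH : IsHurwitzStable A) : IsUnit A.det := by
  rw [isUnit_iff_ne_zero]
  intro h0
  have hdet : ((0:ℂ) • (1 : Matrix n n ℂ) - A.map (algebraMap ℝ ℂ)).det = 0 := by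
    rw [zero_smul, zero_sub, Matrix.det_neg]
    have h1 : (A.map (algebraMap ℝ ℂ)).det = algebraMap ℝ ℂ A.det := by
      rw [(algebraMap ℝ ℂ).map_det]; rfl
    rw [h1, h0, map_zero, mul_zero]
  have := hH 0 ((isRoot_iff A 0).mpr hdet)
  simp at this

lemma entry_norm_le (M : Matrix n n ℂ) (i j : n) : ‖M i j‖ ≤ ‖M‖ := by
  rw [Matrix.linfty_opNorm_def, ← coe_nnnorm]
  have h1 : ‖M i j‖₊ ≤ ∑ j', ‖M i j'‖₊ :=
    Finset.single_le_sum (f := fun j' => ‖M i j'‖₊) (fun _ _ => by positivity) (Finset.mem_univ j)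
  have h2 : (∑ j', ‖M i j'‖₊) ≤ Finset.univ.sup (fun i => ∑ j', ‖M i j'‖₊) :=
    Finset.le_sup (f := fun i => ∑ j', ‖M i j'‖₊) (Finset.mem_univ i)
  exact_mod_cast h1.trans h2

lemma pow_entry_nonneg {X : Matrix n n ℝ} (hX : ∀ i j, 0 ≤ X i j) (k : ℕ) :
    ∀ i j, 0 ≤ (X ^ k) i j := by
  induction k with
  | zero => intro i j; rcases eq_or_ne i j with rfl | h
            · simp
            · simp [Matrix.one_apply_ne h, pow_zero]
  | succ k ih =>
      intro i j
      rw [pow_succ, Matrix.mul_apply]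
      exact Finset.sum_nonneg fun l _ => mul_nonneg (ih i l) (hX l j)

lemma inv_entries_nonpos {A : Matrix n n ℝ} (hMe : IsMetzler A) (hH : IsHurwitzStable A) :
    ∀ i j, A⁻¹ i j ≤ 0 := by
  haveI : CompleteSpace (Matrix n n ℂ) := FiniteDimensional.complete ℂ _
  set f := algebraMap ℝ ℂ with hf
  set Ac := A.map f with hAc
  set p := A.charpoly.map f with hp'
  have hp : p ≠ 0 := (A.charpoly_monic.map f).ne_zero
  set R : Finset ℂ := p.roots.toFinset with hR
  have hroots : ∀ z ∈ R, z.re < 0 := by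
    intro z hz
    exact hH z (isRoot_of_mem_roots (Multiset.mem_toFinset.mp hz))
  -- choose a large shift s
  obtain ⟨s, hs0, hsd, hsr⟩ : ∃ s : ℝ, 0 < s ∧ (∀ i, 0 ≤ A i i + s) ∧
      ∀ z ∈ R, 2*s*z.re + ‖z‖^2 < 0 := by
    have h1 : ∀ᶠ s : ℝ in atTop, 0 < s := eventually_gt_atTop 0
    have h2 : ∀ᶠ s : ℝ in atTop, ∀ i, 0 ≤ A i i + s :=
      eventually_all.mpr fun i => (eventually_ge_atTop (-(A i i))).mono fun s hs => by linarith
    have h3 : ∀ᶠ s : ℝ in atTop, ∀ z ∈ R, 2*s*z.re + ‖z‖^2 < 0 := by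
      rw [eventually_all_finset]
      intro z hz
      have hzre := hroots z hz
      filter_upwards [eventually_gt_atTop (‖z‖^2 / (-(2*z.re)))] with s hs
      have hd : 0 < -(2*z.re) := by linarith
      have := (div_lt_iff₀ hd).mp hs
      linarith
    obtain ⟨s, hs⟩ := (h1.and (h2.and h3)).exists
    exact ⟨s, hs.1, hs.2.1, hs.2.2⟩
  set N : Matrix n n ℝ := A + s • (1 : Matrix n n ℝ) with hN'
  set X : Matrix n n ℝ := s⁻¹ • N with hX'
  have hXnn : ∀ i j, 0 ≤ X i j := by
    intro i j
    rcases eq_or_ne i j with rfl | h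
    · have h0 := hsd i
      simp only [hX', hN', Matrix.smul_apply, Matrix.add_apply, Matrix.one_apply_eq,
        smul_eq_mul, mul_one]
      exact mul_nonneg (inv_nonneg.mpr hs0.le) h0
    · have h0 := hMe i j h
      simp only [hX', hN', Matrix.smul_apply, Matrix.add_apply, Matrix.one_apply_ne h,
        smul_eq_mul, mul_zero, add_zero]
      exact mul_nonneg (inv_nonneg.mpr hs0.le) h0
  set Xc : Matrix n n ℂ := X.map f with hXc'
  -- spectral radius bound
  set r : NNReal := R.sup fun z => ‖(z + s)/s‖₊ with hr'
  have habs : ∀ z ∈ R, ‖(z + (s:ℂ))/(s:ℂ)‖ < 1 := by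
    intro z hz
    have h2 := hsr z hz
    have hzsq : ‖z‖^2 = z.re^2 + z.im^2 := by
      rw [Complex.sq_norm, Complex.normSq_apply]; ring
    have hnum : ‖z + (s:ℂ)‖^2 = (z.re + s)^2 + z.im^2 := by
      rw [Complex.sq_norm, Complex.normSq_apply]
      simp only [Complex.add_re, Complex.add_im, Complex.ofReal_re, Complex.ofReal_im, add_zero]
      ring
    have hlt : ‖z + (s:ℂ)‖ < s := by
      nlinarith [norm_nonneg (z + (s:ℂ)), hs0]
    rw [norm_div]
    have hsnorm : ‖(s:ℂ)‖ = s := by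
      rw [Complex.norm_real, Real.norm_eq_abs, abs_of_pos hs0]
    rw [hsnorm, div_lt_one hs0]
    exact hlt
  have hr1 : r < 1 := by
    rw [hr']
    rw [Finset.sup_lt_iff (by norm_num : (⊥:NNReal) < 1)]
    intro z hz
    have := habs z hz
    rw [← NNReal.coe_lt_coe, coe_nnnorm, NNReal.coe_one]
    exact this
  have hspec : ∀ w ∈ spectrum ℂ Xc, ‖w‖₊ ≤ r := by
    intro w hw
    rw [spectrum.mem_iff] at hw
    have hdetw : ((algebraMap ℂ (Matrix n n ℂ)) w - Xc).det = 0 := by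
      by_contra h
      exact hw ((Matrix.isUnit_iff_isUnit_det _).mpr (isUnit_iff_ne_zero.mpr h))
    have halg : (algebraMap ℂ (Matrix n n ℂ)) w = w • (1:Matrix n n ℂ) :=
      Algebra.algebraMap_eq_smul_one w
    have hsne : ((s:ℂ)) ≠ 0 := by exact_mod_cast hs0.ne'
    have hkey : w • (1:Matrix n n ℂ) - Xc = ((s:ℂ))⁻¹ • ((((s:ℂ)*w - s)) • 1 - Ac) := by
      ext i j
      rcases eq_or_ne i j with rfl | hij
      · simp only [Matrix.sub_apply, Matrix.smul_apply, Matrix.one_apply_eq, Matrix.map_apply,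
          hXc', hX', hN', Matrix.add_apply, hAc, smul_eq_mul, mul_one, hf,
          Complex.coe_algebraMap]
        push_cast
        field_simp
        ring
      · simp only [Matrix.sub_apply, Matrix.smul_apply, Matrix.one_apply_ne hij,
          Matrix.map_apply, hXc', hX', hN', Matrix.add_apply, hAc, smul_eq_mul, mul_zero, hf,
          Complex.coe_algebraMap]
        push_cast
        field_simp
        ring
    have hdet2 : ((((s:ℂ)*w - s)) • (1:Matrix n n ℂ) - Ac).det = 0 := by
      have h5 := hdetw
      rw [halg, hkey, Matrix.det_smul] at h5
      rcases mul_eq_zero.mp h5 with h | h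
      · exact absurd h (pow_ne_zero _ (inv_ne_zero hsne))
      · exact h
    have hmem : (s:ℂ)*w - s ∈ R := by
      rw [hR, Multiset.mem_toFinset, Polynomial.mem_roots hp]
      rw [hp']
      apply (isRoot_iff A _).mpr
      exact hdet2
    have hwr : w = ((s:ℂ)*w - s + s)/s := by field_simp; ring
    calc ‖w‖₊ = ‖((s:ℂ)*w - s + s)/(s:ℂ)‖₊ := by rw [← hwr]
    _ ≤ r := Finset.le_sup (f := fun z => ‖(z + (s:ℂ))/(s:ℂ)‖₊) hmem
  have hle : spectralRadius ℂ Xc ≤ (r : ENNReal) := by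
    unfold spectralRadius
    exact iSup₂_le fun w hw => by exact_mod_cast hspec w hw
  set c : NNReal := (r+1)/2 with hc'
  have hrc : r < c := by
    rw [← NNReal.coe_lt_coe] at hr1 ⊢
    rw [hc', NNReal.coe_div, NNReal.coe_add, NNReal.coe_one]
    push_cast at hr1 ⊢
    linarith
  have hc1 : c < 1 := by
    rw [← NNReal.coe_lt_coe] at hr1 ⊢
    rw [hc', NNReal.coe_div, NNReal.coe_add, NNReal.coe_one]
    push_cast at hr1 ⊢
    linarith
  have hρc : spectralRadius ℂ Xc < (c : ENNReal) :=
    lt_of_le_of_lt hle (by exact_mod_cast hrc)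
  have hev : ∀ᶠ K : ℕ in atTop, (‖Xc ^ K‖₊ : ENNReal) ^ (1/(K:ℝ)) < (c : ENNReal) :=
    (spectrum.pow_nnnorm_pow_one_div_tendsto_nhds_spectralRadius Xc).eventually_lt_const hρc
  have hbd : ∀ᶠ K : ℕ in atTop, ‖Xc ^ K‖ ≤ (c:ℝ)^K := by
    filter_upwards [hev, eventually_ge_atTop 1] with K hK hK1
    have hK0 : (K:ℝ) ≠ 0 := Nat.cast_ne_zero.mpr (by omega)
    have h1 : ((‖Xc^K‖₊ : ENNReal) ^ (1/(K:ℝ)))^(K:ℝ) ≤ ((c:ENNReal))^(K:ℝ) :=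
      ENNReal.rpow_le_rpow hK.le (by positivity)
    rw [← ENNReal.rpow_mul, one_div, inv_mul_cancel₀ hK0, ENNReal.rpow_one,
      ENNReal.rpow_natCast, ← ENNReal.coe_pow, ENNReal.coe_le_coe] at h1
    calc ‖Xc ^ K‖ = ((‖Xc^K‖₊ : NNReal) : ℝ) := (coe_nnnorm _).symm
    _ ≤ ((c^K : NNReal) : ℝ) := by exact_mod_cast h1
    _ = (c:ℝ)^K := by push_cast; ring
  have hXk0 : Tendsto (fun K : ℕ => ‖Xc ^ K‖) atTop (nhds 0) := by
    apply squeeze_zero' (Eventually.of_forall fun _ => norm_nonneg _) hbd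
    exact tendsto_pow_atTop_nhds_zero_of_lt_one c.coe_nonneg (by exact_mod_cast hc1)
  -- real-side algebra
  have hdetA := isUnit_det_of_hurwitz hH
  have hgeom : ∀ K : ℕ, ((1 : Matrix n n ℝ) - X) * (∑ k ∈ Finset.range K, X^k) = 1 - X^K := by
    intro K
    induction K with
    | zero => simp
    | succ K ih =>
        rw [Finset.sum_range_succ, mul_add, ih, sub_mul, one_mul, ← pow_succ']
        abel
  have hAfact : -A = s • ((1:Matrix n n ℝ) - X) := by
    ext i j
    rcases eq_or_ne i j with rfl | hij
    · simp only [Matrix.neg_apply, Matrix.smul_apply, Matrix.sub_apply, Matrix.one_apply_eq,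
        hX', hN', Matrix.add_apply, smul_eq_mul, mul_one]
      field_simp
      ring
    · simp only [Matrix.neg_apply, Matrix.smul_apply, Matrix.sub_apply,
        Matrix.one_apply_ne hij, hX', hN', Matrix.add_apply, smul_eq_mul, mul_zero, add_zero]
      field_simp
      ring
  have key : ∀ K : ℕ, (-A) * (s⁻¹ • ∑ k ∈ Finset.range K, X^k) = 1 - X^K := by
    intro K
    rw [hAfact, smul_mul_assoc, mul_smul_comm, smul_smul, mul_inv_cancel₀ hs0.ne', one_smul,
      hgeom]
  have key2 : ∀ K : ℕ, A⁻¹ = A⁻¹ * X^K - s⁻¹ • ∑ k ∈ Finset.range K, X^k := by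
    intro K
    have h1 := congrArg (fun M => A⁻¹ * M) (key K)
    rw [← Matrix.mul_assoc, Matrix.mul_neg, Matrix.nonsing_inv_mul A hdetA, Matrix.neg_mul,
      Matrix.one_mul, Matrix.mul_sub, Matrix.mul_one] at h1
    calc A⁻¹ = A⁻¹ - A⁻¹ * X^K + A⁻¹ * X^K := by abel
    _ = -(s⁻¹ • ∑ k ∈ Finset.range K, X^k) + A⁻¹ * X^K := by rw [← h1]
    _ = A⁻¹ * X^K - s⁻¹ • ∑ k ∈ Finset.range K, X^k := by abel
  intro i j
  set C : ℝ := ∑ l, |A⁻¹ i l| with hC'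
  have hXcpow : ∀ K : ℕ, Xc ^ K = (X^K).map f := by
    intro K
    rw [hXc', ← RingHom.mapMatrix_apply, ← RingHom.mapMatrix_apply, map_pow]
  have hb : ∀ K : ℕ, A⁻¹ i j ≤ C * ‖Xc^K‖ := by
    intro K
    have h1 := congrFun (congrFun (key2 K) i) j
    rw [Matrix.sub_apply] at h1
    have h2 : 0 ≤ (s⁻¹ • ∑ k ∈ Finset.range K, X^k) i j := by
      rw [Matrix.smul_apply, Matrix.sum_apply]
      refine smul_nonneg (inv_nonneg.mpr hs0.le) ?_
      exact Finset.sum_nonneg fun k _ => pow_entry_nonneg hXnn k i j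
    have h3 : (A⁻¹ * X^K) i j ≤ C * ‖Xc^K‖ := by
      rw [Matrix.mul_apply]
      calc ∑ l, A⁻¹ i l * (X^K) l j ≤ ∑ l, |A⁻¹ i l| * ‖Xc^K‖ := by
            apply Finset.sum_le_sum
            intro l _
            have he : ‖(Xc^K) l j‖ = |(X^K) l j| := by
              rw [hXcpow K, Matrix.map_apply]
              simp [hf, Complex.coe_algebraMap, Complex.norm_real, Real.norm_eq_abs]
            have hle2 : |(X^K) l j| ≤ ‖Xc^K‖ := he ▸ entry_norm_le (Xc^K) l j
            calc A⁻¹ i l * (X^K) l j ≤ |A⁻¹ i l * (X^K) l j| := le_abs_self _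
            _ = |A⁻¹ i l| * |(X^K) l j| := abs_mul _ _
            _ ≤ |A⁻¹ i l| * ‖Xc^K‖ := mul_le_mul_of_nonneg_left hle2 (abs_nonneg _)
      _ = C * ‖Xc^K‖ := by rw [hC', Finset.sum_mul]
    linarith
  have hlim : Tendsto (fun K : ℕ => C * ‖Xc^K‖) atTop (nhds 0) := by
    simpa using hXk0.const_mul C
  exact ge_of_tendsto hlim (Eventually.of_forall hb)


lemma exists_pos_vec {A : Matrix n n ℝ} (hMe : IsMetzler A) (hH : IsHurwitzStable A) :
    ∃ v : n → ℝ, (∀ i, 0 < v i) ∧ (∀ i, (A *ᵥ v) i < 0) := by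
  have hdet := isUnit_det_of_hurwitz hH
  have hinv := inv_entries_nonpos hMe hH
  set v : n → ℝ := -(A⁻¹ *ᵥ (fun _ => 1)) with hv'
  have hAv : ∀ i, (A *ᵥ v) i = -1 := by
    intro i
    have h1 : A *ᵥ (A⁻¹ *ᵥ (fun _ => (1:ℝ))) = (fun _ => (1:ℝ)) := by
      rw [Matrix.mulVec_mulVec, Matrix.mul_nonsing_inv A hdet, Matrix.one_mulVec]
    rw [hv', Matrix.mulVec_neg, h1]
    rfl
  have hv0 : ∀ i, 0 ≤ v i := by
    intro i
    rw [hv']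
    simp only [Pi.neg_apply, Matrix.mulVec, dotProduct, mul_one]
    rw [← Finset.sum_neg_distrib]
    exact Finset.sum_nonneg fun j _ => neg_nonneg.mpr (hinv i j)
  refine ⟨v, ?_, fun i => by rw [hAv i]; norm_num⟩
  intro i
  rcases (hv0 i).lt_or_eq with h | h
  · exact h
  · exfalso
    have h2 : (A *ᵥ v) i = ∑ j, A i j * v j := rfl
    have h3 : ∑ j, A i j * v j = A i i * v i + ∑ j ∈ Finset.univ.erase i, A i j * v j :=
      (Finset.add_sum_erase Finset.univ (fun j => A i j * v j) (Finset.mem_univ i)).symm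
    have h4 : 0 ≤ ∑ j ∈ Finset.univ.erase i, A i j * v j :=
      Finset.sum_nonneg fun j hj =>
        mul_nonneg (hMe i j (Finset.ne_of_mem_erase hj).symm) (hv0 j)
    have h5 := hAv i
    rw [h2] at h5
    rw [h3, ← h, mul_zero, zero_add] at h5
    linarith

lemma mulVec_entry_nonneg {a b : Type*} [Fintype b] {P : Matrix a b ℝ}
    (hP : ∀ i j, 0 ≤ P i j) {x : b → ℝ} (hx : ∀ j, 0 ≤ x j) (i : a) : 0 ≤ (P *ᵥ x) i :=
  Finset.sum_nonneg fun j _ => mul_nonneg (hP i j) (hx j)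

lemma mulVec_entry_mono {a b : Type*} [Fintype b] {P : Matrix a b ℝ}
    (hP : ∀ i j, 0 ≤ P i j) {x y : b → ℝ} (hxy : ∀ j, x j ≤ y j) (i : a) :
    (P *ᵥ x) i ≤ (P *ᵥ y) i :=
  Finset.sum_le_sum fun j _ => mul_le_mul_of_nonneg_left (hxy j) (hP i j)

lemma triple_entry_nonpos {a b : Type*} [Fintype a] [Fintype b] [DecidableEq a]
    {C : Matrix b a ℝ} {Ai : Matrix a a ℝ} {B : Matrix a b ℝ}
    (hC : ∀ i j, 0 ≤ C i j) (hAi : ∀ i j, Ai i j ≤ 0) (hB : ∀ i j, 0 ≤ B i j) :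
    ∀ i j, (C * Ai * B) i j ≤ 0 := by
  intro i j
  rw [Matrix.mul_apply]
  apply Finset.sum_nonpos
  intro k _
  have h1 : (C * Ai) i k ≤ 0 := by
    rw [Matrix.mul_apply]
    apply Finset.sum_nonpos
    intro l _
    exact mul_nonpos_iff.mpr (Or.inl ⟨hC i l, hAi l k⟩)
  exact mul_nonpos_iff.mpr (Or.inr ⟨h1, hB k j⟩)

end MetzlerAux

open MetzlerAux

/-- **Proposition 3.1 (Metzler block criterion).** Let `M = [[A, B], [C, D]]` be a Metzler
matrix in block form with `A` and `D` square. If `A` is invertible (which holds in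
particular whenever `A` is Metzler-stable), then `M` is Metzler-stable if and only if both
`A` and the Schur complement `D − C·A⁻¹·B` are Metzler-stable. -/
theorem metzler_block_criterion
    {l m : Type*} [Fintype l] [Fintype m] [DecidableEq l] [DecidableEq m]
    (A : Matrix l l ℝ) (B : Matrix l m ℝ) (C : Matrix m l ℝ) (D : Matrix m m ℝ)
    (hM : IsMetzler (Matrix.fromBlocks A B C D))
    (hA : IsUnit A.det) :
    IsMetzlerStable (Matrix.fromBlocks A B C D) ↔
      IsMetzlerStable A ∧ IsMetzlerStable (D - C * A⁻¹ * B) := by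
  have hAm : IsMetzler A := fun i j hij =>
    hM (Sum.inl i) (Sum.inl j) (fun h => hij (Sum.inl_injective h))
  have hDm : IsMetzler D := fun i j hij =>
    hM (Sum.inr i) (Sum.inr j) (fun h => hij (Sum.inr_injective h))
  have hB : ∀ i j, 0 ≤ B i j := fun i j => hM (Sum.inl i) (Sum.inr j) (by simp)
  have hC : ∀ i j, 0 ≤ C i j := fun i j => hM (Sum.inr i) (Sum.inl j) (by simp)
  constructor
  · rintro ⟨hMz, hMh⟩
    obtain ⟨v, hv, hAv⟩ := exists_pos_vec hMz hMh
    set v1 : l → ℝ := v ∘ Sum.inl with hv1'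
    set v2 : m → ℝ := v ∘ Sum.inr with hv2'
    have hvelim : (Matrix.fromBlocks A B C D) *ᵥ v =
        Sum.elim (A *ᵥ v1 + B *ᵥ v2) (C *ᵥ v1 + D *ᵥ v2) :=
      Matrix.fromBlocks_mulVec A B C D v
    have htop : ∀ i, (A *ᵥ v1) i + (B *ᵥ v2) i < 0 := by
      intro i
      have := hAv (Sum.inl i)
      rw [hvelim] at this
      simpa using this
    have hbot : ∀ i, (C *ᵥ v1) i + (D *ᵥ v2) i < 0 := by
      intro i
      have := hAv (Sum.inr i)
      rw [hvelim] at this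
      simpa using this
    have hv1 : ∀ i, 0 < v1 i := fun i => hv (Sum.inl i)
    have hv2 : ∀ i, 0 < v2 i := fun i => hv (Sum.inr i)
    have hBv2 : ∀ i, 0 ≤ (B *ᵥ v2) i := mulVec_entry_nonneg hB fun j => (hv2 j).le
    have hAv1 : ∀ i, (A *ᵥ v1) i < 0 := fun i => by linarith [htop i, hBv2 i]
    have hAh : IsHurwitzStable A := MetzlerAux.hurwitz_of_vec hAm hv1 hAv1
    have hAinv := inv_entries_nonpos hAm hAh
    have hAdet := isUnit_det_of_hurwitz hAh
    -- the Schur complement is Metzler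
    have hSm : IsMetzler (D - C * A⁻¹ * B) := by
      intro i j hij
      have h1 := triple_entry_nonpos hC hAinv hB i j
      have h2 := hDm i j hij
      rw [Matrix.sub_apply]
      linarith
    -- the Schur complement is Hurwitz
    have hkey : ∀ k, -(A⁻¹ *ᵥ (B *ᵥ v2)) k ≤ v1 k := by
      intro k
      have hle : ∀ j, (B *ᵥ v2) j ≤ -((A *ᵥ v1) j) := fun j => by linarith [htop j]
      have hmono : ∀ k, ((-A⁻¹) *ᵥ (B *ᵥ v2)) k ≤ ((-A⁻¹) *ᵥ (-(A *ᵥ v1))) k :=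
        mulVec_entry_mono (fun i j => by simpa using neg_nonneg.mpr (hAinv i j)) hle
      have heq : (-A⁻¹) *ᵥ (-(A *ᵥ v1)) = A⁻¹ *ᵥ (A *ᵥ v1) := by
        rw [Matrix.neg_mulVec, Matrix.mulVec_neg, neg_neg]
      have heq2 : A⁻¹ *ᵥ (A *ᵥ v1) = v1 := by
        rw [Matrix.mulVec_mulVec, Matrix.nonsing_inv_mul A hAdet, Matrix.one_mulVec]
      have h3 := hmono k
      rw [heq, heq2, Matrix.neg_mulVec] at h3
      simpa using h3
    have hSv : ∀ i, ((D - C * A⁻¹ * B) *ᵥ v2) i < 0 := by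
      intro i
      have h1 : (D - C * A⁻¹ * B) *ᵥ v2 = D *ᵥ v2 + C *ᵥ (-(A⁻¹ *ᵥ (B *ᵥ v2))) := by
        rw [Matrix.sub_mulVec, ← Matrix.mulVec_mulVec, ← Matrix.mulVec_mulVec,
          Matrix.mulVec_neg]
        abel
      rw [h1]
      have h2 : (C *ᵥ (-(A⁻¹ *ᵥ (B *ᵥ v2)))) i ≤ (C *ᵥ v1) i :=
        mulVec_entry_mono hC hkey i
      have h3 := hbot i
      simp only [Pi.add_apply]
      linarith
    exact ⟨⟨hAm, hAh⟩, ⟨hSm, MetzlerAux.hurwitz_of_vec hSm hv2 hSv⟩⟩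
  · rintro ⟨⟨hAm', hAh⟩, ⟨hSm, hSh⟩⟩
    have hAinv := inv_entries_nonpos hAm' hAh
    obtain ⟨u, hu, hAu⟩ := exists_pos_vec hAm' hAh
    obtain ⟨w, hw, hSw⟩ := exists_pos_vec hSm hSh
    obtain ⟨ε, hε0, hεlt⟩ : ∃ ε : ℝ, 0 < ε ∧
        ∀ i, ((D - C * A⁻¹ * B) *ᵥ w) i + ε * (C *ᵥ u) i < 0 := by
      have h1 : ∀ᶠ ε in nhdsWithin (0:ℝ) (Set.Ioi 0),
          ∀ i, ((D - C * A⁻¹ * B) *ᵥ w) i + ε * (C *ᵥ u) i < 0 := by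
        rw [Filter.eventually_all]
        intro i
        have hcont : Filter.Tendsto (fun ε : ℝ => ((D - C * A⁻¹ * B) *ᵥ w) i + ε * (C *ᵥ u) i)
            (nhdsWithin (0:ℝ) (Set.Ioi 0)) (nhds (((D - C * A⁻¹ * B) *ᵥ w) i)) := by
          apply Filter.Tendsto.mono_left _ nhdsWithin_le_nhds
          have hco : Continuous fun ε : ℝ => ((D - C * A⁻¹ * B) *ᵥ w) i + ε * (C *ᵥ u) i := by
            continuity
          simpa using hco.tendsto 0
        exact hcont.eventually_lt_const (hSw i)
      obtain ⟨ε, hε⟩ := (h1.and self_mem_nhdsWithin).exists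
      exact ⟨ε, hε.2, hε.1⟩
    set v1 : l → ℝ := fun k => -(A⁻¹ *ᵥ (B *ᵥ w)) k + ε * u k with hv1'
    have hv1pos : ∀ k, 0 < v1 k := by
      intro k
      have h1 : 0 ≤ ((-A⁻¹) *ᵥ (B *ᵥ w)) k :=
        mulVec_entry_nonneg (fun i j => by simpa using neg_nonneg.mpr (hAinv i j))
          (mulVec_entry_nonneg hB fun j => (hw j).le) k
      rw [Matrix.neg_mulVec] at h1
      have h2 := mul_pos hε0 (hu k)
      simp only [hv1', Pi.neg_apply] at *
      linarith
    -- compute blocks of M *ᵥ (Sum.elim v1 w)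
    have htop : ∀ i, (A *ᵥ v1) i + (B *ᵥ w) i < 0 := by
      intro i
      have h1 : A *ᵥ v1 = -(B *ᵥ w) + ε • (A *ᵥ u) := by
        rw [hv1']
        have : (fun k => -(A⁻¹ *ᵥ (B *ᵥ w)) k + ε * u k)
            = -(A⁻¹ *ᵥ (B *ᵥ w)) + ε • u := by
          funext k; simp [Pi.smul_apply, smul_eq_mul]
        rw [this, Matrix.mulVec_add, Matrix.mulVec_neg, Matrix.mulVec_smul,
          Matrix.mulVec_mulVec, Matrix.mul_nonsing_inv A (isUnit_det_of_hurwitz hAh),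
          Matrix.one_mulVec]
      rw [h1]
      have h2 := hAu i
      simp only [Pi.add_apply, Pi.neg_apply, Pi.smul_apply, smul_eq_mul]
      have h3 := mul_pos hε0 (hu i)
      nlinarith [mul_pos hε0 (hu i), hε0, h2]
    have hbot : ∀ i, (C *ᵥ v1) i + (D *ᵥ w) i < 0 := by
      intro i
      have h1 : C *ᵥ v1 = C *ᵥ (-(A⁻¹ *ᵥ (B *ᵥ w))) + ε • (C *ᵥ u) := by
        rw [hv1']
        have : (fun k => -(A⁻¹ *ᵥ (B *ᵥ w)) k + ε * u k)
            = -(A⁻¹ *ᵥ (B *ᵥ w)) + ε • u := by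
          funext k; simp [Pi.smul_apply, smul_eq_mul]
        rw [this, Matrix.mulVec_add, Matrix.mulVec_smul]
      have h2 : ((D - C * A⁻¹ * B) *ᵥ w) i
          = (D *ᵥ w) i + (C *ᵥ (-(A⁻¹ *ᵥ (B *ᵥ w)))) i := by
        have : (D - C * A⁻¹ * B) *ᵥ w = D *ᵥ w + C *ᵥ (-(A⁻¹ *ᵥ (B *ᵥ w))) := by
          rw [Matrix.sub_mulVec, ← Matrix.mulVec_mulVec, ← Matrix.mulVec_mulVec,
            Matrix.mulVec_neg]
          abel
        rw [this]; rfl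
      have h3 := hεlt i
      rw [h1]
      simp only [Pi.add_apply, Pi.smul_apply, smul_eq_mul]
      linarith
    have hvpos : ∀ x, 0 < (Sum.elim v1 w) x := by
      intro x; cases x with
      | inl k => exact hv1pos k
      | inr k => exact hw k
    have hMv : ∀ x, ((Matrix.fromBlocks A B C D) *ᵥ (Sum.elim v1 w)) x < 0 := by
      intro x
      rw [Matrix.fromBlocks_mulVec]
      cases x with
      | inl i => simpa using htop i
      | inr i => simpa using hbot i
    exact ⟨hM, MetzlerAux.hurwitz_of_vec hM hvpos hMv⟩
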